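/- In the equal-order case M_o = M_b = M with fixed L̃_{b/o}, the unique minimizer of the bound η (as a function of L̃_o, under the second branch of Theorem th_diffusion_bound) is L̃_o = L̃_{b/o}; equivalently, in terms of Daley length-scales D = L√(2M−3) (for M > 1), the minimum is attained when D_o = D_b. -/

import Mathlib

open Set

private lemma gmono (M : ℕ) (hM : 2 ≤ M) (a : ℝ) (h0 : 0 < a)
    (ha : 1 < (8 * M - 4) * a ^ 2) :
    StrictMonoOn (fun x : ℝ => (1 + 4 * x ^ 2) ^ M / x) (Ici a) := by
  apply strictMonoOn_of_deriv_pos (convex_Ici a)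
  · exact ContinuousOn.div (by fun_prop) continuousOn_id
      (fun x hx => ne_of_gt (lt_of_lt_of_le h0 hx))
  · intro x hx
    rw [interior_Ici] at hx
    have hxa : a < x := hx
    have hx0 : 0 < x := h0.trans hxa
    have hMr : (2:ℝ) ≤ M := by exact_mod_cast hM
    have h1 : HasDerivAt (fun x : ℝ => 1 + 4 * x ^ 2) (8 * x) x := by
      have := ((hasDerivAt_pow 2 x).const_mul 4).const_add 1
      refine this.congr_deriv ?_
      push_cast
      ring
    have h2 : HasDerivAt (fun x : ℝ => (1 + 4 * x ^ 2) ^ M)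
        (M * (1 + 4 * x ^ 2) ^ (M - 1) * (8 * x)) x := h1.pow M
    have h3 : HasDerivAt (fun x : ℝ => (1 + 4 * x ^ 2) ^ M / x)
        ((M * (1 + 4 * x ^ 2) ^ (M - 1) * (8 * x) * x - (1 + 4 * x ^ 2) ^ M * 1) / x ^ 2) x :=
      h2.div (hasDerivAt_id x) (ne_of_gt hx0)
    rw [h3.deriv]
    have hbase : (1 + 4 * x ^ 2 : ℝ) ^ M = (1 + 4 * x ^ 2) ^ (M - 1) * (1 + 4 * x ^ 2) := by
      rw [← pow_succ, Nat.sub_add_cancel (by omega : 1 ≤ M)]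
    have hpM : (0:ℝ) < (1 + 4 * x ^ 2) ^ (M - 1) := by positivity
    have hdx : 1 < (8 * M - 4) * x ^ 2 := by nlinarith
    have key : (0:ℝ) < 8 * M * x ^ 2 - 1 - 4 * x ^ 2 := by nlinarith
    have hnum : 0 < (M:ℝ) * (1 + 4 * x ^ 2) ^ (M - 1) * (8 * x) * x
        - (1 + 4 * x ^ 2) ^ M * 1 := by
      rw [hbase]
      nlinarith [mul_pos hpM key]
    exact div_pos hnum (by positivity)

/-- In the equal-order case `M_o = M_b = M` with fixed `L̃_{b/o}`,
the unique minimizer of the bound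
`f(L̃_o) = 1 + (c/L̃_o)·max{(1+4L̃_o²)^M/(1+4L̃_{b/o}²)^M, 1}` (second branch of
Theorem `th_diffusion_bound`, `c > 0`) over the domain `L̃_o √(2M-1) > 1/2` is
`L̃_o = L̃_{b/o}`; equivalently, in terms of Daley length-scales `D = L√(2M-3)`
(for `M > 1`), the minimum is attained when `D_o = D_b`. -/
theorem stmt16 (c Lb : ℝ) (hc : 0 < c) (hLb : 0 < Lb)
    (M : ℕ) (hM : 2 ≤ M)
    (hLbDom : 1 / 2 < Lb * Real.sqrt (2 * M - 1))
    (f : ℝ → ℝ)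
    (hf : ∀ x : ℝ, f x =
      1 + (c / x) * max ((1 + 4 * x ^ 2) ^ M / (1 + 4 * Lb ^ 2) ^ M) 1) :
    (∀ y : ℝ, 1 / 2 < y * Real.sqrt (2 * M - 1) → y ≠ Lb → f Lb < f y) ∧
    (∀ Lo : ℝ, 0 < Lo →
      (Lo * Real.sqrt (2 * M - 3) = Lb * Real.sqrt (2 * M - 3) ↔ Lo = Lb)) := by
  have hMr : (2:ℝ) ≤ M := by exact_mod_cast hM
  have hs : (0:ℝ) < Real.sqrt (2 * M - 1) := Real.sqrt_pos.mpr (by nlinarith)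
  have hsq : Real.sqrt (2 * M - 1) ^ 2 = 2 * M - 1 := Real.sq_sqrt (by nlinarith)
  have hP : (0:ℝ) < (1 + 4 * Lb ^ 2) ^ M := by positivity
  have hfLb : f Lb = 1 + c / Lb := by
    rw [hf, div_self (ne_of_gt hP), max_self, mul_one]
  have hdLb : 1 < (8 * M - 4) * Lb ^ 2 := by
    have h := mul_self_lt_mul_self (by norm_num : (0:ℝ) ≤ 1 / 2) hLbDom
    nlinarith [hsq]
  constructor
  · intro y hy hne
    have hy0 : 0 < y := by
      by_contra h
      push_neg at h
      nlinarith [mul_nonpos_of_nonpos_of_nonneg h hs.le]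
    have hQ : (0:ℝ) < (1 + 4 * y ^ 2) ^ M := by positivity
    rcases lt_or_gt_of_ne hne with hlt | hgt
    · -- y < Lb : max is 1
      have hle : (1 + 4 * y ^ 2 : ℝ) ^ M ≤ (1 + 4 * Lb ^ 2) ^ M :=
        pow_le_pow_left₀ (by positivity) (by nlinarith) M
      have hmax : max ((1 + 4 * y ^ 2 : ℝ) ^ M / (1 + 4 * Lb ^ 2) ^ M) 1 = 1 :=
        max_eq_right ((div_le_one hP).mpr hle)
      rw [hf y, hmax, mul_one, hfLb]
      have : c / Lb < c / y := div_lt_div_of_pos_left hc hy0 hlt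
      linarith
    · -- Lb < y : max is the ratio
      have hle : (1 + 4 * Lb ^ 2 : ℝ) ^ M ≤ (1 + 4 * y ^ 2) ^ M :=
        pow_le_pow_left₀ (by positivity) (by nlinarith) M
      have hmax : max ((1 + 4 * y ^ 2 : ℝ) ^ M / (1 + 4 * Lb ^ 2) ^ M) 1
          = (1 + 4 * y ^ 2) ^ M / (1 + 4 * Lb ^ 2) ^ M :=
        max_eq_left ((one_le_div hP).mpr hle)
      rw [hf y, hmax, hfLb]
      have hmono := gmono M hM Lb hLb hdLb (self_mem_Ici) (le_of_lt hgt : Lb ≤ y) hgt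
      simp only at hmono
      have h1 : (1 + 4 * Lb ^ 2 : ℝ) ^ M * y < (1 + 4 * y ^ 2) ^ M * Lb := by
        rw [div_lt_div_iff₀ hLb hy0] at hmono
        linarith
      have key : c / Lb < c / y * ((1 + 4 * y ^ 2) ^ M / (1 + 4 * Lb ^ 2) ^ M) := by
        rw [div_mul_div_comm, div_lt_div_iff₀ hLb (by positivity)]
        nlinarith [mul_lt_mul_of_pos_left h1 hc]
      linarith
  · intro Lo hLo
    have hs3 : (0:ℝ) < Real.sqrt (2 * M - 3) := Real.sqrt_pos.mpr (by nlinarith)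
    exact ⟨fun h => mul_right_cancel₀ (ne_of_gt hs3) h, fun h => by rw [h]⟩
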